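/- (Higher Dirac propagation principle) Let Δ be a proper geometric simplicial complex and ω a linear differential such that, for some k ≥ 0, (Δ,ω) is toric k-chordal and Δ has no missing faces of dimension k+1. Then (Δ,ω) is toric (k+1)-chordal. -/

import Mathlib

open MvPolynomial

open MvPolynomial

/-- An abstract simplicial complex on the vertex set `Fin n`:
a collection of finite subsets closed under taking subsets. -/
def IsComplex {n : ℕ} (Δ : Set (Finset (Fin n))) : Prop :=
  ∀ σ ∈ Δ, ∀ τ ⊆ σ, τ ∈ Δ

/-- The vertex set `Δ^(0)` of a simplicial complex. -/
def verts {n : ℕ} (Δ : Set (Finset (Fin n))) : Set (Fin n) := {v | {v} ∈ Δ}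

/-- The partial derivative `∂/∂xᵢ` as a linear endomorphism of `ℝ[x₁,…,xₙ]`. -/
noncomputable def pd {n : ℕ} (i : Fin n) : Module.End ℝ (MvPolynomial (Fin n) ℝ) :=
  (pderiv i).toLinearMap

/-- The constant coefficient differential operator `(x^a)^∨ = ∏ᵢ (∂/∂xᵢ)^(aᵢ)`. -/
noncomputable def monDiff {n : ℕ} (a : Fin n →₀ ℕ) : Module.End ℝ (MvPolynomial (Fin n) ℝ) :=
  ((List.finRange n).map fun i => pd i ^ a i).prod

/-- The stress space `S̃(Δ)`: polynomials annihilated by `q^∨` for every `q` in the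
nonface ideal `I_Δ` (equivalently, by `(x^a)^∨` for every monomial generator `x^a` of `I_Δ`). -/
noncomputable def tStress {n : ℕ} (Δ : Set (Finset (Fin n))) :
    Submodule ℝ (MvPolynomial (Fin n) ℝ) :=
  ⨅ a ∈ {a : Fin n →₀ ℕ | a.support ∉ Δ}, LinearMap.ker (monDiff a)

/-- A linear differential `Σᵢ cᵢ ∂/∂xᵢ`. -/
noncomputable def linDiff {n : ℕ} (c : Fin n → ℝ) : Module.End ℝ (MvPolynomial (Fin n) ℝ) :=
  ∑ i, c i • pd i

/-- The canonical differential `δ = Σᵢ ∂/∂xᵢ`. -/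
noncomputable def canDiff (n : ℕ) : Module.End ℝ (MvPolynomial (Fin n) ℝ) :=
  linDiff fun _ => (1 : ℝ)

/-- The coordinate differential `θⱼ = Σᵢ (vᵢ)ⱼ ∂/∂xᵢ` of a geometric simplicial complex. -/
noncomputable def coordDiff {n d : ℕ} (V : Fin n → Fin d → ℝ) (j : Fin d) :
    Module.End ℝ (MvPolynomial (Fin n) ℝ) :=
  linDiff fun i => V i j

/-- The stress space `S(Δ)` of a geometric simplicial complex with vertex coordinates `V`. -/
noncomputable def stress {n d : ℕ} (V : Fin n → Fin d → ℝ) (Δ : Set (Finset (Fin n))) :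
    Submodule ℝ (MvPolynomial (Fin n) ℝ) :=
  tStress Δ ⊓ ⨅ j : Fin d, LinearMap.ker (coordDiff V j)

/-- The degree-`k` graded piece `S_k(Δ)` of the stress space. -/
noncomputable def stressK {n d : ℕ} (V : Fin n → Fin d → ℝ) (Δ : Set (Finset (Fin n)))
    (k : ℕ) : Submodule ℝ (MvPolynomial (Fin n) ℝ) :=
  stress V Δ ⊓ homogeneousSubmodule (Fin n) ℝ k

/-- A geometric simplicial complex in `ℝ^d` is proper if the coordinates of each face of
dimension `< d` are linearly independent. -/
def IsProper {n d : ℕ} (V : Fin n → Fin d → ℝ) (Δ : Set (Finset (Fin n))) : Prop :=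
  ∀ σ ∈ Δ, σ.card ≤ d → LinearIndependent ℝ (fun i : {x // x ∈ σ} => V i.1)

/-- The star of a face. -/
def cStar {n : ℕ} (Δ : Set (Finset (Fin n))) (σ : Finset (Fin n)) : Set (Finset (Fin n)) :=
  {τ ∈ Δ | σ ∪ τ ∈ Δ}

/-- The star of a vertex. -/
def vStar {n : ℕ} (Δ : Set (Finset (Fin n))) (v : Fin n) : Set (Finset (Fin n)) :=
  cStar Δ {v}

/-- The boundary `∂St_v Δ` of the star of a vertex: faces of the star not containing `v`. -/
def vStarBd {n : ℕ} (Δ : Set (Finset (Fin n))) (v : Fin n) : Set (Finset (Fin n)) :=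
  {τ ∈ vStar Δ v | v ∉ τ}

/-- The link of a face. -/
def lk {n : ℕ} (Δ : Set (Finset (Fin n))) (σ : Finset (Fin n)) : Set (Finset (Fin n)) :=
  {τ | Disjoint σ τ ∧ σ ∪ τ ∈ Δ}

/-- The vertex set `γ^(0)` of the support of a stress `γ`. -/
noncomputable def stressVerts {n : ℕ} (γ : MvPolynomial (Fin n) ℝ) : Finset (Fin n) :=
  γ.support.biUnion fun a => a.support

/-- `g_k = dim S_k − dim S_{k−1}` (with `S_{−1} = 0`). -/
noncomputable def gnum {n d : ℕ} (V : Fin n → Fin d → ℝ) (Δ : Set (Finset (Fin n)))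
    (k : ℕ) : ℤ :=
  (Module.finrank ℝ ↥(stressK V Δ k) : ℤ) -
    if k = 0 then 0 else (Module.finrank ℝ ↥(stressK V Δ (k - 1)) : ℤ)

/-- The homogenizing embedding `ℝ^d → ℝ^d × {1} ⊆ ℝ^{d+1}` applied to vertex coordinates. -/
noncomputable def homV {n d : ℕ} (p : Fin n → Fin d → ℝ) : Fin n → Fin (d + 1) → ℝ :=
  fun i => Fin.snoc (p i) 1

/-- `Δ` is the boundary complex of the simplicial `d`-polytope `conv{p 1, …, p n}`:
the polytope is full-dimensional, every `p i` is a vertex, the faces of `Δ` are exactly the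
vertex sets cut out by supporting hyperplanes, and every proper face is a simplex. -/
def IsSimplicialPolytopeBoundary {n d : ℕ} (p : Fin n → Fin d → ℝ)
    (Δ : Set (Finset (Fin n))) : Prop :=
  affineSpan ℝ (Set.range p) = ⊤ ∧
  (∀ i, p i ∉ convexHull ℝ (p '' {j | j ≠ i})) ∧
  (∀ σ ∈ Δ, AffineIndependent ℝ (fun i : {x // x ∈ σ} => p i.1)) ∧
  (∀ σ : Finset (Fin n), σ ∈ Δ ↔
    ∃ (f : (Fin d → ℝ) →ₗ[ℝ] ℝ) (c : ℝ),
      (∃ i, f (p i) < c) ∧ (∀ i, f (p i) ≤ c) ∧ (∀ i, f (p i) = c ↔ i ∈ σ))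

/-- The simplicial boundary operator (with real coefficients), on the free module spanned by
all finite subsets of `Fin n`; the empty set plays the role of the `(−1)`-face, so that the
associated homology is reduced. -/
noncomputable def bdry {n : ℕ} : (Finset (Fin n) →₀ ℝ) →ₗ[ℝ] (Finset (Fin n) →₀ ℝ) :=
  Finsupp.lsum ℝ fun σ => LinearMap.toSpanSingleton ℝ _
    (∑ i ∈ σ, ((-1 : ℝ) ^ (σ.filter (· < i)).card) • Finsupp.single (σ.erase i) (1 : ℝ))

/-- The space of simplicial `k`-chains of `Δ` (spanned by faces of `Δ` of dimension `k`). -/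
noncomputable def chains {n : ℕ} (Δ : Set (Finset (Fin n))) (k : ℤ) :
    Submodule ℝ (Finset (Fin n) →₀ ℝ) :=
  Finsupp.supported ℝ ℝ {σ | σ ∈ Δ ∧ (σ.card : ℤ) = k + 1}

/-- Reduced simplicial `k`-cycles of `Δ`. -/
noncomputable def cycles {n : ℕ} (Δ : Set (Finset (Fin n))) (k : ℤ) :
    Submodule ℝ (Finset (Fin n) →₀ ℝ) :=
  chains Δ k ⊓ LinearMap.ker bdry

/-- Simplicial `k`-boundaries of `Δ`. -/
noncomputable def bdries {n : ℕ} (Δ : Set (Finset (Fin n))) (k : ℤ) :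
    Submodule ℝ (Finset (Fin n) →₀ ℝ) :=
  Submodule.map bdry (chains Δ (k + 1))

/-- The reduced Betti number `β̃_k(Δ)` (with real coefficients). -/
noncomputable def rBetti {n : ℕ} (Δ : Set (Finset (Fin n))) (k : ℤ) : ℕ :=
  Module.finrank ℝ ↥(cycles Δ k) - Module.finrank ℝ ↥(bdries Δ k)

/-- The induced subcomplex `Δ_W` on a vertex set `W`. -/
def induced {n : ℕ} (Δ : Set (Finset (Fin n))) (W : Finset (Fin n)) : Set (Finset (Fin n)) :=
  {σ ∈ Δ | σ ⊆ W}

/-- The vertex set of the support of a simplicial chain. -/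
def chainVerts {n : ℕ} (c : Finset (Fin n) →₀ ℝ) : Finset (Fin n) :=
  c.support.biUnion id

/-- `Δ` is resolution `k`-chordal: every `k`-cycle `z` admits a resolution, i.e. a
`(k+1)`-chain `c` with `∂c = z` and `c^(0) = z^(0)`. -/
def ResolutionChordal {n : ℕ} (Δ : Set (Finset (Fin n))) (k : ℤ) : Prop :=
  ∀ z ∈ cycles Δ k, ∃ c ∈ chains Δ (k + 1), bdry c = z ∧ chainVerts c = chainVerts z

/-- `(Δ, ω)` is toric `k`-chordal: `ω : S_{k+1}(Δ) → S_k(Δ)` is surjective and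
`ω : S_k(Δ) → S_{k−1}(Δ)` is injective. -/
def ToricChordal {n d : ℕ} (V : Fin n → Fin d → ℝ) (Δ : Set (Finset (Fin n)))
    (ω : Module.End ℝ (MvPolynomial (Fin n) ℝ)) (k : ℕ) : Prop :=
  (∀ γ ∈ stressK V Δ k, ∃ γ' ∈ stressK V Δ (k + 1), ω γ' = γ) ∧
  (∀ γ ∈ stressK V Δ k, ω γ = 0 → γ = 0)

/-- `(Δ, ω)` is weakly toric `k`-chordal: `ω : S_k(St_v Δ) → S_{k−1}(St_v Δ)` is injective
for every vertex `v` of `Δ`. -/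
def WeaklyToricChordal {n d : ℕ} (V : Fin n → Fin d → ℝ) (Δ : Set (Finset (Fin n)))
    (ω : Module.End ℝ (MvPolynomial (Fin n) ℝ)) (k : ℕ) : Prop :=
  ∀ v ∈ verts Δ, ∀ γ ∈ stressK V (vStar Δ v) k, ω γ = 0 → γ = 0

/-- A missing face of `Δ`: a nonface all of whose proper subsets are faces. -/
def IsMissingFace {n : ℕ} (Δ : Set (Finset (Fin n))) (σ : Finset (Fin n)) : Prop :=
  σ ∉ Δ ∧ ∀ τ ⊂ σ, τ ∈ Δ

/-- Representatives of relative `k`-stresses of the relative complex `(Δ', Γ)`: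
homogeneous degree-`k` elements of `S̃(Δ')` whose image under each coordinate differential
lies in `S̃(Γ)`.  The relative stress space `S_k(Δ', Γ)` is the quotient of this space by
(the degree-`k` part of) `S̃(Γ)`. -/
noncomputable def relStressK {n d : ℕ} (V : Fin n → Fin d → ℝ)
    (Δ' Γ : Set (Finset (Fin n))) (k : ℕ) : Submodule ℝ (MvPolynomial (Fin n) ℝ) :=
  tStress Δ' ⊓ homogeneousSubmodule (Fin n) ℝ k ⊓
    ⨅ j : Fin d, (tStress Γ).comap (coordDiff V j)

/-- A shelling of a pure `(d−1)`-dimensional simplicial complex: a linear order on the facets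
such that the intersection of each facet with the union of all subsequent facets is a pure
`(d−2)`-dimensional complex or empty. -/
def IsShelling {n : ℕ} (Δ : Set (Finset (Fin n))) (d : ℕ) (L : List (Finset (Fin n))) : Prop :=
  L.Nodup ∧ (∀ σ, σ ∈ L ↔ σ ∈ Δ ∧ σ.card = d) ∧
  (∀ σ ∈ Δ, ∃ F ∈ L, σ ⊆ F) ∧
  ∀ (i : ℕ) (hi : i < L.length) (τ : Finset (Fin n)), τ ⊆ L.get ⟨i, hi⟩ →
    (∃ (j : ℕ) (hj : j < L.length), i < j ∧ τ ⊆ L.get ⟨j, hj⟩) →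
    ∃ ρ, τ ⊆ ρ ∧ ρ ⊆ L.get ⟨i, hi⟩ ∧ ρ.card = d - 1 ∧
      ∃ (j : ℕ) (hj : j < L.length), i < j ∧ ρ ⊆ L.get ⟨j, hj⟩

/-- The degree-`k` graded piece of the stress space `S̃(Δ)`. -/
noncomputable def tStressK {n : ℕ} (Δ : Set (Finset (Fin n))) (k : ℕ) :
    Submodule ℝ (MvPolynomial (Fin n) ℝ) :=
  tStress Δ ⊓ homogeneousSubmodule (Fin n) ℝ k

/-- A sequence `θ` of linear differentials is regular up to degree `k` on `S̃(Δ)`: each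
`θ_j` maps the degree-`(i+1)` part of the common kernel of `θ_1, …, θ_{j−1}` in `S̃(Δ)` onto
the degree-`i` part, for every `i ≤ k`. -/
def RegularUpTo {n : ℕ} (Δ : Set (Finset (Fin n)))
    (θ : List (Module.End ℝ (MvPolynomial (Fin n) ℝ))) (k : ℕ) : Prop :=
  ∀ j < θ.length, ∀ i ≤ k,
    ∀ γ ∈ tStressK Δ i ⊓ ⨅ l ∈ Finset.range j, LinearMap.ker (θ.getD l 0),
      ∃ γ' ∈ tStressK Δ (i + 1) ⊓ ⨅ l ∈ Finset.range j, LinearMap.ker (θ.getD l 0),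
        θ.getD j 0 γ' = γ

/-- `dim Δ + 1`: the maximal cardinality of a face. -/
noncomputable def dim1 {n : ℕ} (Δ : Set (Finset (Fin n))) : ℕ :=
  sSup {m | ∃ σ ∈ Δ, σ.card = m}

/-- `Δ` is Cohen–Macaulay over `ℝ`: the reduced homology of every face link vanishes below
the expected dimension. -/
def IsCM {n : ℕ} (Δ : Set (Finset (Fin n))) : Prop :=
  ∀ σ ∈ Δ, ∀ i : ℤ, i < (dim1 Δ : ℤ) - 1 - σ.card →
    cycles (lk Δ σ) i ≤ bdries (lk Δ σ) i

/-- `(q, T)` is a triangulation of the simplicial polytope `P = conv{p i}` whose faces contained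
in the boundary `∂P` form exactly the boundary complex `Δ` of `P`. -/
def IsTriangulation {n d m : ℕ} (p : Fin n → Fin d → ℝ) (Δ : Set (Finset (Fin n)))
    (q : Fin m → Fin d → ℝ) (T : Set (Finset (Fin m))) : Prop :=
  IsComplex T ∧
  (∀ σ ∈ T, AffineIndependent ℝ (fun i : {x // x ∈ σ} => q i.1)) ∧
  (∀ σ ∈ T, ∀ τ ∈ T,
    convexHull ℝ (q '' ↑σ) ∩ convexHull ℝ (q '' ↑τ) = convexHull ℝ (q '' ↑(σ ∩ τ))) ∧
  (⋃ σ ∈ T, convexHull ℝ (q '' ↑σ)) = convexHull ℝ (Set.range p) ∧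
  {s : Set (Fin d → ℝ) | ∃ σ ∈ T,
      convexHull ℝ (q '' ↑σ) ⊆ frontier (convexHull ℝ (Set.range p)) ∧ s = q '' ↑σ}
    = {s : Set (Fin d → ℝ) | ∃ σ ∈ Δ, s = p '' ↑σ}

/-- The restriction `Δ_S` of a balanced complex to the set `S` of colors. -/
def colorRestrict {n d : ℕ} (Δ : Set (Finset (Fin n))) (col : Fin n → Fin d)
    (S : Finset (Fin d)) : Set (Finset (Fin n)) :=
  {σ ∈ Δ | ∀ v ∈ σ, col v ∈ S}


section
variable {n : ℕ}

lemma coeff_pderiv' (i : Fin n) (m : Fin n →₀ ℕ) (p : MvPolynomial (Fin n) ℝ) :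
    coeff m (pderiv i p) = ((m i : ℝ) + 1) * coeff (m + Finsupp.single i 1) p := by
  induction p using MvPolynomial.induction_on' with
  | monomial s a =>
      rw [pderiv_monomial, coeff_monomial, coeff_monomial]
      by_cases hs : s i = 0
      · have h1 : ¬ s = m + Finsupp.single i 1 := by
          intro h; apply absurd hs; rw [h]; simp
        simp [hs, h1]
      · have hle : Finsupp.single i 1 ≤ s := by rw [Finsupp.single_le_iff]; omega
        have hiff : s - Finsupp.single i 1 = m ↔ s = m + Finsupp.single i 1 :=
          tsub_eq_iff_eq_add_of_le hle
        by_cases h : s = m + Finsupp.single i 1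
        · have hsi : s i = m i + 1 := by rw [h]; simp
          simp [hiff.mpr, h, hiff, hsi]; ring
        · simp [h, hiff]
  | add p q hp hq => simp [coeff_add, hp, hq]; ring

lemma isHomog_iff (p : MvPolynomial (Fin n) ℝ) (k : ℕ) :
    p.IsHomogeneous k ↔ ∀ d : Fin n →₀ ℕ, coeff d p ≠ 0 → d.degree = k := by
  unfold MvPolynomial.IsHomogeneous MvPolynomial.IsWeightedHomogeneous
  simp [Finsupp.degree_eq_weight_one]
  rfl

lemma degree_add' (a b : Fin n →₀ ℕ) : (a + b).degree = a.degree + b.degree := by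
  simp [Finsupp.degree_eq_weight_one, map_add]

lemma degree_single' (i : Fin n) (t : ℕ) : (Finsupp.single i t).degree = t := by
  rcases Nat.eq_zero_or_pos t with h | h
  · simp [h, Finsupp.degree]
  · rw [Finsupp.degree_apply, Finsupp.support_single_ne_zero _ (Nat.pos_iff_ne_zero.mp h)]
    simp

-- pderiv homogeneity
lemma pderiv_homog {p : MvPolynomial (Fin n) ℝ} {k : ℕ} (hp : p.IsHomogeneous k) (i : Fin n) :
    (pderiv i p).IsHomogeneous (k - 1) := by
  rw [isHomog_iff] at hp ⊢
  intro d hd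
  rw [coeff_pderiv'] at hd
  have h2 : coeff (d + Finsupp.single i 1) p ≠ 0 := by
    intro h; rw [h] at hd; simp at hd
  have := hp _ h2
  rw [degree_add', degree_single'] at this
  omega

lemma pderiv_homog_zero {p : MvPolynomial (Fin n) ℝ} (hp : p.IsHomogeneous 0) (i : Fin n) :
    pderiv i p = 0 := by
  rw [isHomog_iff] at hp
  ext d
  rw [coeff_pderiv', coeff_zero]
  have : coeff (d + Finsupp.single i 1) p = 0 := by
    by_contra h
    have := hp _ h
    rw [degree_add', degree_single'] at this
    omega
  rw [this, mul_zero]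

lemma eq_zero_of_pderiv_zero {p : MvPolynomial (Fin n) ℝ} {k : ℕ} (hp : p.IsHomogeneous k)
    (hk : 0 < k) (h : ∀ i, pderiv i p = 0) : p = 0 := by
  ext d
  rw [coeff_zero]
  by_cases hd : d = 0
  · subst hd
    exact hp.coeff_eq_zero (by simpa using hk.ne)
  · obtain ⟨i, hi⟩ : ∃ i, d i ≠ 0 := by
      by_contra hc
      push_neg at hc
      exact hd (Finsupp.ext fun i => hc i)
    have h2 := coeff_pderiv' i (d - Finsupp.single i 1) p
    rw [h i, coeff_zero] at h2
    have hle : Finsupp.single i 1 ≤ d := by rw [Finsupp.single_le_iff]; omega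
    rw [tsub_add_cancel_of_le hle] at h2
    have hne : (((d - Finsupp.single i 1 : Fin n →₀ ℕ) i : ℝ)) + 1 ≠ 0 := by
      have : (0:ℝ) ≤ ((d - Finsupp.single i 1 : Fin n →₀ ℕ) i : ℝ) := Nat.cast_nonneg _
      linarith
    exact (mul_eq_zero.mp h2.symm).resolve_left hne

-- Euler
lemma euler {p : MvPolynomial (Fin n) ℝ} {k : ℕ} (hp : p.IsHomogeneous k) :
    ∑ i, X i * pderiv i p = (k : ℝ) • p := by
  ext d
  rw [coeff_smul]
  rw [MvPolynomial.coeff_sum]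
  have hterm : ∀ i, coeff d (X i * pderiv i p) = (d i : ℝ) * coeff d p := by
    intro i
    rw [coeff_X_mul']
    by_cases hi : i ∈ d.support
    · rw [if_pos hi, coeff_pderiv']
      have h1 : d i ≠ 0 := Finsupp.mem_support_iff.mp hi
      have hle : Finsupp.single i 1 ≤ d := by rw [Finsupp.single_le_iff]; omega
      rw [tsub_add_cancel_of_le hle]
      have h3 : (d - Finsupp.single i 1 : Fin n →₀ ℕ) i = d i - 1 := by
        rw [Finsupp.tsub_apply, Finsupp.single_eq_same]
      rw [h3]
      have : ((d i - 1 : ℕ) : ℝ) + 1 = (d i : ℝ) := by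
        rw [Nat.cast_sub (by omega : 1 ≤ d i)]
        ring
      rw [this]
    · rw [if_neg hi]
      have : d i = 0 := by simpa using hi
      rw [this]; simp
  rw [Finset.sum_congr rfl fun i _ => hterm i, ← Finset.sum_mul]
  by_cases hc : coeff d p = 0
  · simp [hc]
  · have hdeg := (isHomog_iff p k).mp hp d hc
    have : ∑ i, (d i : ℝ) = (k : ℝ) := by
      rw [← hdeg, Finsupp.degree_apply]
      rw [← Finset.sum_subset (Finset.subset_univ d.support)]
      · push_cast; rfl
      · intro x _ hx; simp [Finsupp.notMem_support_iff.mp hx]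
    rw [this, smul_eq_mul]
end

section Stmt7Aux

variable {n : ℕ}

lemma comm_apply {f g : Module.End ℝ (MvPolynomial (Fin n) ℝ)} (h : Commute f g)
    (p : MvPolynomial (Fin n) ℝ) : f (g p) = g (f p) := by
  have := DFunLike.congr_fun h.eq p
  simpa [Module.End.mul_apply] using this

lemma pd_comm (i j : Fin n) : Commute (pd i) (pd j) := by
  refine LinearMap.ext fun p => ?_
  show pderiv i (pderiv j p) = pderiv j (pderiv i p)
  ext d
  rw [coeff_pderiv', coeff_pderiv', coeff_pderiv', coeff_pderiv']
  rw [add_right_comm d (Finsupp.single i 1) (Finsupp.single j 1)]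
  rcases eq_or_ne i j with h | h
  · subst h; ring
  · have h1 : (d + Finsupp.single i 1 : Fin n →₀ ℕ) j = d j := by
      rw [Finsupp.add_apply, Finsupp.single_apply, if_neg h, add_zero]
    have h2 : (d + Finsupp.single j 1 : Fin n →₀ ℕ) i = d i := by
      rw [Finsupp.add_apply, Finsupp.single_apply, if_neg (Ne.symm h), add_zero]
    rw [h1, h2]; ring

lemma commute_pd_monDiff (i : Fin n) (a : Fin n →₀ ℕ) : Commute (pd i) (monDiff a) := by
  refine Commute.list_prod_right _ _ ?_
  intro x hx
  obtain ⟨j, -, rfl⟩ := List.mem_map.mp hx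
  exact (pd_comm i j).pow_right _

lemma commute_linDiff_pd (c : Fin n → ℝ) (i : Fin n) : Commute (linDiff c) (pd i) := by
  refine Commute.symm (Commute.sum_right _ _ _ ?_)
  intro j _
  exact (pd_comm i j).smul_right (c j)

lemma commute_linDiff_monDiff (c : Fin n → ℝ) (a : Fin n →₀ ℕ) :
    Commute (linDiff c) (monDiff a) := by
  refine Commute.list_prod_right _ _ ?_
  intro x hx
  obtain ⟨j, -, rfl⟩ := List.mem_map.mp hx
  exact ((commute_linDiff_pd c j)).pow_right _

lemma monDiff_add_list (a b : Fin n →₀ ℕ) (l : List (Fin n)) :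
    (l.map fun i => pd i ^ (a + b) i).prod =
      (l.map fun i => pd i ^ a i).prod * (l.map fun i => pd i ^ b i).prod := by
  induction l with
  | nil => simp
  | cons j l ih =>
      simp only [List.map_cons, List.prod_cons, ih]
      have hc : Commute (pd j ^ b j) ((l.map fun i => pd i ^ a i).prod) := by
        refine Commute.list_prod_right _ _ ?_
        intro x hx
        obtain ⟨i, -, rfl⟩ := List.mem_map.mp hx
        exact (pd_comm j i).pow_pow _ _
      have happ : (a + b) j = a j + b j := Finsupp.add_apply a b j
      rw [happ, pow_add, mul_assoc, ← mul_assoc (pd j ^ b j), hc.eq, mul_assoc, ← mul_assoc]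

lemma monDiff_add (a b : Fin n →₀ ℕ) : monDiff (a + b) = monDiff a * monDiff b :=
  monDiff_add_list a b _

lemma monDiff_single_list (i : Fin n) (t : ℕ) (l : List (Fin n)) (hl : l.Nodup) :
    (l.map fun j => pd j ^ (Finsupp.single i t) j).prod = if i ∈ l then pd i ^ t else 1 := by
  induction l with
  | nil => simp
  | cons j l ih =>
      simp only [List.map_cons, List.prod_cons]
      rw [ih (List.Nodup.of_cons hl)]
      rcases eq_or_ne i j with h | h
      · subst h
        have hni : i ∉ l := (List.nodup_cons.mp hl).1
        rw [if_neg hni, if_pos List.mem_cons_self, mul_one]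
        congr 1
        exact Finsupp.single_eq_same
      · have : (Finsupp.single i t) j = 0 := by
          rw [Finsupp.single_apply, if_neg h]
        rw [this, pow_zero, one_mul]
        by_cases hmem : i ∈ l
        · rw [if_pos hmem, if_pos (List.mem_cons_of_mem j hmem)]
        · rw [if_neg hmem, if_neg (by simp [List.mem_cons, h, hmem])]

lemma monDiff_single (i : Fin n) (t : ℕ) : monDiff (Finsupp.single i t) = pd i ^ t := by
  rw [monDiff, monDiff_single_list i t _ (List.nodup_finRange n),
    if_pos (List.mem_finRange i)]

lemma monDiff_zero : monDiff (0 : Fin n →₀ ℕ) = 1 := by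
  rw [monDiff]
  refine List.prod_eq_one ?_
  intro x hx
  obtain ⟨j, -, rfl⟩ := List.mem_map.mp hx
  simp

lemma pdpow_homog (i : Fin n) (t : ℕ) : ∀ (s : ℕ) (p : MvPolynomial (Fin n) ℝ),
    p.IsHomogeneous s →
    ((pd i ^ t) p).IsHomogeneous (s - t) ∧ (s < t → (pd i ^ t) p = 0) := by
  induction t with
  | zero =>
      intro s p hp
      rw [pow_zero]
      exact ⟨by simpa using hp, fun h => absurd h (by omega)⟩
  | succ t ih =>
      intro s p hp
      have hstep : (pd i ^ (t + 1)) p = (pd i ^ t) (pderiv i p) := by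
        rw [pow_succ, Module.End.mul_apply]; rfl
      rcases Nat.eq_zero_or_pos s with hs | hs
      · subst hs
        rw [hstep, pderiv_homog_zero hp i, map_zero]
        exact ⟨isHomogeneous_zero _ _ _, fun _ => rfl⟩
      · have h1 := pderiv_homog hp i
        obtain ⟨ih1, ih2⟩ := ih (s - 1) _ h1
        rw [hstep]
        constructor
        · have : s - 1 - t = s - (t + 1) := by omega
          rwa [this] at ih1
        · intro h
          exact ih2 (by omega)

lemma monDiff_homog (b : Fin n →₀ ℕ) : ∀ (m : ℕ) (p : MvPolynomial (Fin n) ℝ),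
    p.IsHomogeneous m →
    ((monDiff b) p).IsHomogeneous (m - b.degree) ∧ (m < b.degree → monDiff b p = 0) := by
  induction b using Finsupp.induction with
  | zero =>
      intro m p hp
      rw [monDiff_zero]
      exact ⟨by simpa using hp, fun h => absurd h (by simp)⟩
  | single_add i t f hif ht ih =>
      intro m p hp
      have hsplit : monDiff (Finsupp.single i t + f) p = (pd i ^ t) (monDiff f p) := by
        rw [monDiff_add, monDiff_single, Module.End.mul_apply]
      obtain ⟨h1, h2⟩ := ih m p hp
      obtain ⟨h3, h4⟩ := pdpow_homog i t (m - f.degree) _ h1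
      have hdeg : (Finsupp.single i t + f).degree = t + f.degree := by
        rw [degree_add', degree_single']
      rw [hsplit]
      constructor
      · have : m - f.degree - t = m - (Finsupp.single i t + f).degree := by
          rw [hdeg]; omega
        rwa [this] at h3
      · intro h
        rcases lt_or_ge m f.degree with h5 | h5
        · rw [h2 h5, map_zero]
        · exact h4 (by rw [hdeg] at h; omega)

lemma monDiff_factor {a b : Fin n →₀ ℕ} (h : b ≤ a) (p : MvPolynomial (Fin n) ℝ) :
    monDiff a p = monDiff (a - b) (monDiff b p) := by
  rw [← Module.End.mul_apply, ← monDiff_add, tsub_add_cancel_of_le h]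

lemma exists_missing {Δ : Set (Finset (Fin n))} :
    ∀ σ : Finset (Fin n), σ ∉ Δ → ∃ τ, τ ⊆ σ ∧ IsMissingFace Δ τ := by
  intro σ
  induction σ using Finset.strongInduction with
  | _ σ ih =>
    intro hσ
    by_cases h : ∀ τ ⊂ σ, τ ∈ Δ
    · exact ⟨σ, subset_rfl, hσ, h⟩
    · push_neg at h
      obtain ⟨τ, hsub, hτ⟩ := h
      obtain ⟨ρ, h1, h2⟩ := ih τ hsub hτ
      exact ⟨ρ, h1.trans hsub.subset, h2⟩

lemma mem_tStress_iff {Δ : Set (Finset (Fin n))} {γ : MvPolynomial (Fin n) ℝ} :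
    γ ∈ tStress Δ ↔ ∀ a : Fin n →₀ ℕ, a.support ∉ Δ → monDiff a γ = 0 := by
  simp [tStress, Submodule.mem_iInf, LinearMap.mem_ker, Set.mem_setOf_eq]

lemma mem_stressK_iff {d : ℕ} {V : Fin n → Fin d → ℝ} {Δ : Set (Finset (Fin n))} {k : ℕ}
    {γ : MvPolynomial (Fin n) ℝ} :
    γ ∈ stressK V Δ k ↔
      (γ ∈ tStress Δ ∧ ∀ j, coordDiff V j γ = 0) ∧ γ.IsHomogeneous k := by
  simp [stressK, stress, Submodule.mem_inf, Submodule.mem_iInf, LinearMap.mem_ker,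
    mem_homogeneousSubmodule, and_assoc]

lemma pd_mem_stressK {d : ℕ} {V : Fin n → Fin d → ℝ} {Δ : Set (Finset (Fin n))} {k : ℕ}
    {γ : MvPolynomial (Fin n) ℝ} (h : γ ∈ stressK V Δ (k + 1)) (i : Fin n) :
    pd i γ ∈ stressK V Δ k := by
  obtain ⟨⟨hts, hcd⟩, hhom⟩ := mem_stressK_iff.mp h
  refine mem_stressK_iff.mpr ⟨⟨?_, ?_⟩, ?_⟩
  · rw [mem_tStress_iff] at hts ⊢
    intro a ha
    rw [← comm_apply (commute_pd_monDiff i a) γ, hts a ha, map_zero]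
  · intro j
    have hc : Commute (coordDiff V j) (pd i) := commute_linDiff_pd _ i
    rw [comm_apply hc γ, hcd j, map_zero]
  · have := pderiv_homog hhom i
    exact (this : ((pd i) γ).IsHomogeneous (k + 1 - 1))

lemma linDiff_apply' (c : Fin n → ℝ) (p : MvPolynomial (Fin n) ℝ) :
    linDiff c p = ∑ i, c i • pderiv i p := by
  rw [linDiff, LinearMap.sum_apply]
  rfl

lemma linDiff_homog (c : Fin n → ℝ) {p : MvPolynomial (Fin n) ℝ} {k : ℕ}
    (hp : p.IsHomogeneous k) : ((linDiff c) p).IsHomogeneous (k - 1) := by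
  rw [linDiff_apply']
  rw [← mem_homogeneousSubmodule]
  refine Submodule.sum_mem _ fun i _ => Submodule.smul_mem _ _ ?_
  exact pderiv_homog hp i

end Stmt7Aux

theorem stmt7 {n d : ℕ} (V : Fin n → Fin d → ℝ) (Δ : Set (Finset (Fin n)))
    (hΔ : IsComplex Δ) (hp : IsProper V Δ) (c : Fin n → ℝ) (k : ℕ)
    (h1 : ToricChordal V Δ (linDiff c) k)
    (h2 : ∀ σ : Finset (Fin n), IsMissingFace Δ σ → σ.card ≠ k + 2) :
    ToricChordal V Δ (linDiff c) (k + 1) := by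
  classical
  obtain ⟨hsurj, hinj⟩ := h1
  refine ⟨?_, ?_⟩
  · -- surjectivity at level k+1
    intro γ hγ
    by_cases hE : (∅ : Finset (Fin n)) ∈ Δ
    · obtain ⟨⟨hts, hcd⟩, hhom⟩ := mem_stressK_iff.mp hγ
      choose g hg hωg using fun i => hsurj (pd i γ) (pd_mem_stressK hγ i)
      have hghom : ∀ i, (g i).IsHomogeneous (k + 1) := fun i => (mem_stressK_iff.mp (hg i)).2
      have hgts : ∀ i, ∀ a : Fin n →₀ ℕ, a.support ∉ Δ → monDiff a (g i) = 0 :=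
        fun i => mem_tStress_iff.mp (mem_stressK_iff.mp (hg i)).1.1
      have hgcd : ∀ i j, coordDiff V j (g i) = 0 := fun i => (mem_stressK_iff.mp (hg i)).1.2
      have hcompat : ∀ i j, pderiv j (g i) = pderiv i (g j) := by
        intro i j
        have hmem : pd j (g i) - pd i (g j) ∈ stressK V Δ k :=
          sub_mem (pd_mem_stressK (hg i) j) (pd_mem_stressK (hg j) i)
        have hω : linDiff c (pd j (g i) - pd i (g j)) = 0 := by
          rw [map_sub, comm_apply (commute_linDiff_pd c j) (g i),
            comm_apply (commute_linDiff_pd c i) (g j), hωg i, hωg j,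
            comm_apply (pd_comm j i) γ, sub_self]
        exact sub_eq_zero.mp (hinj _ hmem hω)
      set γ' : MvPolynomial (Fin n) ℝ := ((k : ℝ) + 2)⁻¹ • ∑ i, X i * g i with hγ'
      have hk2 : ((k : ℝ) + 2) ≠ 0 := by positivity
      have hpdγ' : ∀ j, pderiv j γ' = g j := by
        intro j
        rw [hγ', Derivation.map_smul, map_sum]
        have hterm : ∀ i, pderiv j (X i * g i) =
            pderiv j (X i) * g i + X i * pderiv j (g i) := fun i => pderiv_mul
        rw [Finset.sum_congr rfl fun i _ => hterm i, Finset.sum_add_distrib]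
        have hS1 : ∑ i, pderiv j (X i) * g i = g j := by
          rw [Finset.sum_eq_single j]
          · rw [pderiv_X_self, one_mul]
          · intro i _ hij
            rw [pderiv_X_of_ne hij, zero_mul]
          · intro h; exact absurd (Finset.mem_univ j) h
        have hS2 : ∑ i, X i * pderiv j (g i) = ((k : ℝ) + 1) • g j := by
          have : ∀ i, X i * pderiv j (g i) = X i * pderiv i (g j) := by
            intro i; rw [hcompat i j]
          rw [Finset.sum_congr rfl fun i _ => this i, euler (hghom j)]
          push_cast
          ring_nf
        rw [hS1, hS2]
        have hcomb : g j + ((k : ℝ) + 1) • g j = ((k : ℝ) + 2) • g j := by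
          module
        rw [hcomb, smul_smul, inv_mul_cancel₀ hk2, one_smul]
      have hγ'hom : γ'.IsHomogeneous (k + 2) := by
        rw [← mem_homogeneousSubmodule, hγ']
        refine Submodule.smul_mem _ _ (Submodule.sum_mem _ fun i _ => ?_)
        rw [mem_homogeneousSubmodule]
        have h12 : 1 + (k + 1) = k + 2 := by omega
        rw [← h12]
        exact (isHomogeneous_X ℝ i).mul (hghom i)
      have key : ∀ b : Fin n →₀ ℕ, b.support ∉ Δ → b.degree ≠ k + 2 → monDiff b γ' = 0 := by
        intro b hb hbne
        rcases lt_or_ge (k + 2) b.degree with hgt | hle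
        · exact (monDiff_homog b _ _ hγ'hom).2 hgt
        · refine eq_zero_of_pderiv_zero (monDiff_homog b _ _ hγ'hom).1 (by omega) ?_
          intro j
          have h1 : pd j (monDiff b γ') = monDiff b (pd j γ') :=
            comm_apply (commute_pd_monDiff j b) γ'
          have h2' : pd j γ' = g j := hpdγ' j
          show pd j (monDiff b γ') = 0
          rw [h1, h2']
          exact hgts j b hb
      have hγ'ts : γ' ∈ tStress Δ := by
        rw [mem_tStress_iff]
        intro a ha
        obtain ⟨τ, hτa, hτmiss⟩ := exists_missing a.support ha
        set b : Fin n →₀ ℕ := ∑ i ∈ τ, Finsupp.single i 1 with hbdef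
        have hbapp : ∀ j, b j = if j ∈ τ then 1 else 0 := by
          intro j
          rw [hbdef, Finsupp.finset_sum_apply]
          simp [Finsupp.single_apply]
        have hbsupp : b.support = τ := by
          ext j
          rw [Finsupp.mem_support_iff, hbapp j]
          split_ifs with h <;> simp [h]
        have hbdeg : b.degree = τ.card := by
          rw [Finsupp.degree_apply, hbsupp]
          rw [Finset.sum_congr rfl fun j hj => (hbapp j).trans (if_pos hj)]
          simp
        have hble : b ≤ a := by
          rw [Finsupp.le_def]
          intro j
          rw [hbapp j]
          split_ifs with h
          · have : j ∈ a.support := hτa h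
            rw [Finsupp.mem_support_iff] at this
            omega
          · exact Nat.zero_le _
        have hbz : monDiff b γ' = 0 :=
          key b (by rw [hbsupp]; exact hτmiss.1) (by rw [hbdeg]; exact h2 τ hτmiss)
        rw [monDiff_factor hble, hbz, map_zero]
      have hγ'cd : ∀ j, coordDiff V j γ' = 0 := by
        intro j
        have hhomq : ((coordDiff V j) γ').IsHomogeneous (k + 1) := by
          have h1 : Module.End ℝ (MvPolynomial (Fin n) ℝ) := coordDiff V j
          have := linDiff_homog (fun i' => V i' j) hγ'hom
          simpa [coordDiff] using this
        refine eq_zero_of_pderiv_zero hhomq (by omega) ?_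
        intro i
        have hc : Commute (coordDiff V j) (pd i) := commute_linDiff_pd _ i
        show pd i ((coordDiff V j) γ') = 0
        rw [← comm_apply hc γ']
        have h1 : pd i γ' = g i := hpdγ' i
        rw [h1]
        exact hgcd i j
      have hωγ' : linDiff c γ' = γ := by
        have hq : (linDiff c γ' - γ).IsHomogeneous (k + 1) := by
          rw [← mem_homogeneousSubmodule]
          refine sub_mem ?_ ?_
          · rw [mem_homogeneousSubmodule]
            have := linDiff_homog c hγ'hom
            simpa using this
          · rw [mem_homogeneousSubmodule]; exact hhom
        have hz : linDiff c γ' - γ = 0 := by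
          refine eq_zero_of_pderiv_zero hq (by omega) ?_
          intro i
          show pd i (linDiff c γ' - γ) = 0
          rw [map_sub, ← comm_apply (commute_linDiff_pd c i) γ']
          have h1 : pd i γ' = g i := hpdγ' i
          rw [h1, hωg i, sub_self]
        exact sub_eq_zero.mp hz
      exact ⟨γ', mem_stressK_iff.mpr ⟨⟨hγ'ts, hγ'cd⟩, hγ'hom⟩, hωγ'⟩
    · have hγ0 : γ = 0 := by
        have hts := (mem_stressK_iff.mp hγ).1.1
        have h0 := mem_tStress_iff.mp hts 0 (by simpa using hE)
        rwa [monDiff_zero, Module.End.one_apply] at h0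
      exact ⟨0, Submodule.zero_mem _, by rw [map_zero, hγ0]⟩
  · -- injectivity at level k+1
    intro γ hγ hωγ
    have hhom := (mem_stressK_iff.mp hγ).2
    refine eq_zero_of_pderiv_zero hhom (by omega) ?_
    intro i
    refine hinj _ (pd_mem_stressK hγ i) ?_
    show (linDiff c) ((pd i) γ) = 0
    rw [comm_apply (commute_linDiff_pd c i) γ, hωγ, map_zero]
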